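/- Let u₁, u₂, u₃, u₄ ∈ S² be four points such that every three of them are linearly independent. Then the following are equivalent: (a) −u₁ ∈ C(u₂,u₃,u₄); (b) −u₂ ∈ C(u₁,u₃,u₄); (c) −u₃ ∈ C(u₁,u₂,u₄); (d) −u₄ ∈ C(u₁,u₂,u₃). -/

import Mathlib

open scoped RealInnerProductSpace

noncomputable section

/-- ℝ³ as EuclideanSpace. -/
abbrev E3 : Type := EuclideanSpace ℝ (Fin 3)

/-- Determinant of the 3×3 matrix with columns u, v, w. -/
def det3 (u v w : E3) : ℝ :=
  Matrix.det !![u 0, v 0, w 0; u 1, v 1, w 1; u 2, v 2, w 2]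

/-- The minimizing great-circle arc joining two non-antipodal points of S². -/
def sphericalEdge (u v : E3) : Set E3 :=
  {p | ∃ a b : ℝ, 0 ≤ a ∧ 0 ≤ b ∧ (a ≠ 0 ∨ b ≠ 0) ∧
    p = ‖a • u + b • v‖⁻¹ • (a • u + b • v)}

/-- A spherical polygon: a cyclic sequence of distinct points of S² with consecutive
vertices non-antipodal. -/
def IsSphericalPolygon {n : ℕ} (u : ZMod n → E3) : Prop :=
  (∀ i, ‖u i‖ = 1) ∧ Function.Injective u ∧ (∀ i, u (i + 1) ≠ -(u i))

/-- The i-th edge of a spherical polygon. -/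
def polyEdge {n : ℕ} (u : ZMod n → E3) (i : ZMod n) : Set E3 :=
  sphericalEdge (u i) (u (i + 1))

/-- A spherical polygon is simple if non-adjacent edges are disjoint and adjacent
edges meet only in their common vertex. -/
def IsSimple {n : ℕ} (u : ZMod n → E3) : Prop :=
  (∀ i j : ZMod n, j ≠ i → j ≠ i + 1 → i ≠ j + 1 →
      Disjoint (polyEdge u i) (polyEdge u j)) ∧
  (∀ i : ZMod n, polyEdge u i ∩ polyEdge u (i + 1) = {u (i + 1)})

/-- A family of points of S² is balanced if it is not contained in any closed
hemisphere. -/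
def IsBalanced {ι : Type*} (u : ι → E3) : Prop :=
  ∀ w : E3, w ≠ 0 → ∃ i, ⟪u i, w⟫ < 0

/-- Points in general position: no three on a common great circle. -/
def GeneralPosition {ι : Type*} (u : ι → E3) : Prop :=
  ∀ i j k : ι, i ≠ j → i ≠ k → j ≠ k → det3 (u i) (u j) (u k) ≠ 0

/-- Spherical inflection of a spherical polygon at index i. -/
def Inflection {n : ℕ} (u : ZMod n → E3) (i : ZMod n) : Prop :=
  det3 (u (i - 1)) (u i) (u (i + 1)) * det3 (u i) (u (i + 1)) (u (i + 2)) < 0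

/-- The polygon Q − uᵢ obtained by deleting the vertex uᵢ, reindexed over ZMod (n-1),
starting at u_{i+1}. -/
def eraseVertex {n : ℕ} (u : ZMod n → E3) (i : ZMod n) : ZMod (n - 1) → E3 :=
  fun j => u (i + 1 + (j.val : ZMod n))

/-- The open cone spanned by three vectors. -/
def openCone3 (a b c : E3) : Set E3 :=
  {x | ∃ l₁ l₂ l₃ : ℝ, 0 < l₁ ∧ 0 < l₂ ∧ 0 < l₃ ∧ x = l₁ • a + l₂ • b + l₃ • c}

end


lemma cone_swap (a b c : ℝ) (x y z w : E3) (ha : 0 < a) (hb : 0 < b) (hc : 0 < c)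
    (h : -x = a • y + b • z + c • w) : -y ∈ openCone3 x z w := by
  refine ⟨a⁻¹, b / a, c / a, by positivity, by positivity, by positivity, ?_⟩
  have hx : x = -(a • y + b • z + c • w) := neg_eq_iff_eq_neg.mp h
  rw [hx]
  match_scalars <;> field_simp <;> ring

/-- For four points of S², every three of which are linearly
independent, the four conditions −uᵢ ∈ C(of the other three) are equivalent. -/
theorem stmt_5 (u₁ u₂ u₃ u₄ : E3)
    (h₁ : ‖u₁‖ = 1) (h₂ : ‖u₂‖ = 1) (h₃ : ‖u₃‖ = 1) (h₄ : ‖u₄‖ = 1)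
    (hind : ∀ i j k : Fin 4, i ≠ j → i ≠ k → j ≠ k →
      LinearIndependent ℝ ![![u₁, u₂, u₃, u₄] i, ![u₁, u₂, u₃, u₄] j, ![u₁, u₂, u₃, u₄] k]) :
    ((-u₁ ∈ openCone3 u₂ u₃ u₄ ↔ -u₂ ∈ openCone3 u₁ u₃ u₄) ∧
     (-u₁ ∈ openCone3 u₂ u₃ u₄ ↔ -u₃ ∈ openCone3 u₁ u₂ u₄) ∧
     (-u₁ ∈ openCone3 u₂ u₃ u₄ ↔ -u₄ ∈ openCone3 u₁ u₂ u₃)) := by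
  refine ⟨⟨?_, ?_⟩, ⟨?_, ?_⟩, ⟨?_, ?_⟩⟩ <;> rintro ⟨a, b, c, ha, hb, hc, h⟩
  · exact cone_swap a b c u₁ u₂ u₃ u₄ ha hb hc h
  · exact cone_swap a b c u₂ u₁ u₃ u₄ ha hb hc h
  · exact cone_swap b a c u₁ u₃ u₂ u₄ hb ha hc (by rw [h]; module)
  · exact ⟨b / a, a⁻¹, c / a, by positivity, by positivity, by positivity, by
      rw [neg_eq_iff_eq_neg.mp h]; match_scalars <;> field_simp <;> ring⟩
  · exact cone_swap c a b u₁ u₄ u₂ u₃ hc ha hb (by rw [h]; module)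
  · exact ⟨b / a, c / a, a⁻¹, by positivity, by positivity, by positivity, by
      rw [neg_eq_iff_eq_neg.mp h]; match_scalars <;> field_simp <;> ring⟩
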